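/- arXiv:1407.8543 — 5 statements merged into one kernel-verified Lean document; each statement's English description precedes it below -/
import Mathlib

section
/- Let A be the Cartan matrix of a complex semisimple Lie algebra of rank r, let I = (i_1,…,i_n) be a word with entries in {1,…,r}, and let λ = (λ_1,…,λ_r) be a dominant weight. Let (C(c,ℓ), ρ) be the associated Grossberg–Karshon twisted cube (c_{jk} = A_{i_j i_k}, ℓ_j = λ_{i_j}). If there exists a subword (i_{j_0}, i_{j_1}, …, i_{j_s}) of I which is a hesitant λ-walk, then (C(c,ℓ), ρ) is twisted. -/
open Finset

/-- `A_j(x) = ℓ_j − Σ_{k>j} c_{jk} x_k` (for the last index the sum is empty). -/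
noncomputable def GKA {n : ℕ} (c : Fin n → Fin n → ℤ) (ℓ : Fin n → ℤ)
    (j : Fin n) (x : Fin n → ℝ) : ℝ :=
  (ℓ j : ℝ) - ∑ k ∈ Finset.univ.filter (fun k : Fin n => j < k), (c j k : ℝ) * x k

/-- The Grossberg–Karshon twisted cube `C(c,ℓ)`. -/
noncomputable def GKcube {n : ℕ} (c : Fin n → Fin n → ℤ) (ℓ : Fin n → ℤ) :
    Set (Fin n → ℝ) :=
  {x | ∀ j : Fin n, (GKA c ℓ j x < x j ∧ x j < 0) ∨ (0 ≤ x j ∧ x j ≤ GKA c ℓ j x)}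

/-- `sgn(t) = 1` for `t < 0` and `−1` for `t ≥ 0`. -/
noncomputable def GKsgn (t : ℝ) : ℝ := if t < 0 then 1 else -1

open Classical in
/-- The density function `ρ`: `ρ(x) = (−1)^n ∏_k sgn(x_k)` on `C(c,ℓ)`, `0` elsewhere. -/
noncomputable def GKrho {n : ℕ} (c : Fin n → Fin n → ℤ) (ℓ : Fin n → ℤ)
    (x : Fin n → ℝ) : ℝ :=
  if x ∈ GKcube c ℓ then (-1 : ℝ) ^ n * ∏ k : Fin n, GKsgn (x k) else 0

/-- `(C(c,ℓ), ρ)` is untwisted: `C(c,ℓ)` is closed, convex, the convex hull of a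
finite set, and `ρ ≡ 1` on `C(c,ℓ)`.  "Twisted" is the negation of this. -/
noncomputable def GKUntwisted {n : ℕ} (c : Fin n → Fin n → ℤ) (ℓ : Fin n → ℤ) : Prop :=
  IsClosed (GKcube c ℓ) ∧ Convex ℝ (GKcube c ℓ) ∧
  (∃ S : Finset (Fin n → ℝ), GKcube c ℓ = convexHull ℝ (S : Set (Fin n → ℝ))) ∧
  (∀ x ∈ GKcube c ℓ, GKrho c ℓ x = 1)

/-- The Cartier data `m_σ`, defined by downward recursion:
`m_{σ,k} = 0` if `σ_k = +` (encoded `false`), and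
`m_{σ,k} = ℓ_k − Σ_{s>k} c_{ks} m_{σ,s}` if `σ_k = −` (encoded `true`). -/
def GKm {n : ℕ} (c : Fin n → Fin n → ℤ) (ℓ : Fin n → ℤ) (σ : Fin n → Bool)
    (k : Fin n) : ℤ :=
  if σ k then
    ℓ k - ∑ s ∈ (Finset.univ.filter fun s : Fin n => k < s).attach,
      c k s.1 * GKm c ℓ σ s.1
  else 0
termination_by n - k.val
decreasing_by
  have h := s.2
  simp only [Finset.mem_filter, Finset.mem_univ, true_and, Fin.lt_def] at h
  omega

/-- `A` is the Cartan matrix of a complex semisimple Lie algebra of rank `r`,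
i.e. a generalized Cartan matrix of finite type: diagonal entries `2`,
nonpositive off-diagonal entries, `A_{ab} = 0 ↔ A_{ba} = 0`, and `A` is
symmetrizable by positive rationals `d_a` with `(d_a A_{ab})` symmetric
positive definite. -/
def IsCartanMatrix {r : ℕ} (A : Matrix (Fin r) (Fin r) ℤ) : Prop :=
  (∀ a, A a a = 2) ∧
  (∀ a b, a ≠ b → A a b ≤ 0) ∧
  (∀ a b, A a b = 0 ↔ A b a = 0) ∧
  (∃ d : Fin r → ℚ, (∀ a, 0 < d a) ∧
    (∀ a b, d a * (A a b : ℚ) = d b * (A b a : ℚ)) ∧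
    (∀ x : Fin r → ℚ, x ≠ 0 → 0 < ∑ a, ∑ b, x a * d a * (A a b : ℚ) * x b))

/-- `(w_0, …, w_s)` is a diagram walk followed by the condition that the final
root appears in `λ`: a `λ`-walk.  (Successive entries are distinct and adjacent
in the Dynkin diagram, and `λ_{w_s} > 0`.) -/
def IsLambdaWalkSeq {r : ℕ} (A : Matrix (Fin r) (Fin r) ℤ) (lam : Fin r → ℤ)
    {s : ℕ} (w : Fin (s + 1) → Fin r) : Prop :=
  (∀ t : Fin s, w t.castSucc ≠ w t.succ ∧ A (w t.castSucc) (w t.succ) < 0) ∧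
  0 < lam (w (Fin.last s))

/-- `(w_0, w_1, …, w_s)` is a hesitant `λ`-walk: `s ≥ 1`, `w_0 = w_1`, the
walking component `(w_1, …, w_s)` is a diagram walk, and `λ_{w_s} > 0`. -/
def IsHesitantLambdaWalkSeq {r : ℕ} (A : Matrix (Fin r) (Fin r) ℤ)
    (lam : Fin r → ℤ) {s : ℕ} (w : Fin (s + 1) → Fin r) : Prop :=
  1 ≤ s ∧ w 0 = w 1 ∧
  (∀ t : Fin s, 1 ≤ t.val →
    (w t.castSucc ≠ w t.succ ∧ A (w t.castSucc) (w t.succ) < 0)) ∧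
  0 < lam (w (Fin.last s))

/-- The word `i = (i_1, …, i_n)` is hesitant-`λ`-walk-avoiding: no subword
(subsequence, given by a strictly increasing reindexing `j`) is a hesitant
`λ`-walk. -/
def HesitantLambdaWalkAvoiding {r n : ℕ} (A : Matrix (Fin r) (Fin r) ℤ)
    (lam : Fin r → ℤ) (i : Fin n → Fin r) : Prop :=
  ¬ ∃ (s : ℕ) (j : Fin (s + 1) → Fin n), StrictMono j ∧
      IsHesitantLambdaWalkSeq A lam (i ∘ j)

/-- Minimality of a hesitant `λ`-walk `(w_0, …, w_s)`: the entries of the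
walking component `w_1, …, w_s` are pairwise distinct, and if `s ≥ 2` then
`λ_{w_t} = 0` for `0 ≤ t ≤ s − 1`. -/
def MinimalHLW {r s : ℕ} (lam : Fin r → ℤ) (w : Fin (s + 1) → Fin r) : Prop :=
  (∀ p q : Fin (s + 1), 1 ≤ p.val → 1 ≤ q.val → w p = w q → p = q) ∧
  (2 ≤ s → ∀ t : Fin (s + 1), t.val ≤ s - 1 → lam (w t) = 0)


/-- A hesitant λ-walk given by positions `P 0 < P 1 < ... < P s` in the word. -/
def IsWalkP {r n : ℕ} (A : Matrix (Fin r) (Fin r) ℤ) (lam : Fin r → ℤ)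
    (i : Fin n → Fin r) (s : ℕ) (P : ℕ → Fin n) : Prop :=
  1 ≤ s ∧ (∀ t u, t < u → u ≤ s → P t < P u) ∧ i (P 0) = i (P 1) ∧
  (∀ t, 1 ≤ t → t < s → A (i (P t)) (i (P (t + 1))) < 0) ∧ 0 < lam (i (P s))

lemma isWalkP_of_seq {r n : ℕ} (A : Matrix (Fin r) (Fin r) ℤ) (lam : Fin r → ℤ)
    (i : Fin n → Fin r) (s : ℕ) (j : Fin (s + 1) → Fin n) (hj : StrictMono j)
    (hw : IsHesitantLambdaWalkSeq A lam (i ∘ j)) :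
    ∃ P : ℕ → Fin n, IsWalkP A lam i s P := by
  obtain ⟨hs, h01, hadj, hfin⟩ := hw
  set P : ℕ → Fin n := fun t => j ⟨min t s, Nat.lt_succ_of_le (min_le_right t s)⟩ with hPdef
  have hP : ∀ (t : ℕ) (h : t ≤ s), P t = j ⟨t, Nat.lt_succ_of_le h⟩ := by
    intro t h; simp only [hPdef]; congr 1; exact Fin.ext (by simp; omega)
  refine ⟨P, hs, ?_, ?_, ?_, ?_⟩
  · intro t u ht hu
    rw [hP u hu, hP t (le_trans (le_of_lt ht) hu)]
    exact hj (by simpa [Fin.lt_def] using ht)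
  · rw [hP 0 (by omega), hP 1 hs]
    have h0 : (⟨0, Nat.lt_succ_of_le (by omega : 0 ≤ s)⟩ : Fin (s+1)) = 0 := rfl
    have h1 : (⟨1, Nat.lt_succ_of_le hs⟩ : Fin (s+1)) = 1 := Fin.ext (by rw [Fin.val_one']; exact (Nat.mod_eq_of_lt (by omega)).symm)
    rw [h0, h1]; exact h01
  · intro t ht1 hts
    have := (hadj ⟨t, hts⟩ ht1).2
    rw [hP t (le_of_lt hts), hP (t+1) hts]
    exact this
  · rw [hP s le_rfl]
    exact hfin

/-- Restarting a walk at an earlier occurrence `k` of the letter `i (P u)`. -/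
lemma isWalkP_restart {r n : ℕ} (A : Matrix (Fin r) (Fin r) ℤ) (lam : Fin r → ℤ)
    (i : Fin n → Fin r) (s : ℕ) (P : ℕ → Fin n) (hW : IsWalkP A lam i s P)
    (u : ℕ) (hu1 : 1 ≤ u) (hus : u ≤ s) (k : Fin n) (hk : k < P u)
    (hik : i k = i (P u)) :
    IsWalkP A lam i (s - u + 1) (fun m => if m = 0 then k else P (u + m - 1)) := by
  obtain ⟨hs, hmono, h01, hadj, hfin⟩ := hW
  refine ⟨by omega, ?_, ?_, ?_, ?_⟩
  · intro t m ht hm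
    by_cases ht0 : t = 0
    · subst ht0
      simp only [if_neg (by omega : ¬ m = 0)]
      rcases eq_or_lt_of_le (by omega : u ≤ u + m - 1) with h | h
      · rw [← h]; exact hk
      · exact lt_trans hk (hmono u (u + m - 1) h (by omega))
    · simp only [if_neg ht0, if_neg (by omega : ¬ m = 0)]
      exact hmono (u + t - 1) (u + m - 1) (by omega) (by omega)
  · have e0 : (if (0:ℕ) = 0 then k else P (u + 0 - 1)) = k := if_pos rfl
    have e1 : (if (1:ℕ) = 0 then k else P (u + 1 - 1)) = P u := by
      have h : u + 1 - 1 = u := by omega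
      rw [if_neg one_ne_zero, h]
    show i (if (0:ℕ) = 0 then k else P (u + 0 - 1)) = i (if (1:ℕ) = 0 then k else P (u + 1 - 1))
    rw [e0, e1]; exact hik
  · intro t ht1 hts
    simp only [if_neg (by omega : ¬ t = 0), if_neg (by omega : ¬ t + 1 = 0)]
    have : u + (t + 1) - 1 = (u + t - 1) + 1 := by omega
    rw [this]
    exact hadj (u + t - 1) (by omega) (by omega)
  · simp only [if_neg (by omega : ¬ s - u + 1 = 0)]
    have : u + (s - u + 1) - 1 = s := by omega
    rw [this]; exact hfin

/-- A minimal hesitant λ-walk, with the geometric properties we need. -/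
lemma exists_min_walk {r n : ℕ} (A : Matrix (Fin r) (Fin r) ℤ) (lam : Fin r → ℤ)
    (i : Fin n → Fin r) (s₀ : ℕ) (j : Fin (s₀ + 1) → Fin n) (hj : StrictMono j)
    (hw : IsHesitantLambdaWalkSeq A lam (i ∘ j)) :
    ∃ (s : ℕ) (P : ℕ → Fin n), IsWalkP A lam i s P ∧
      (∀ u, 2 ≤ u → u ≤ s → ∀ k : Fin n, k < P u → i k ≠ i (P u)) ∧
      (∀ k : Fin n, P 0 < k → k < P 1 → i k ≠ i (P 1)) ∧
      (∀ t u, 1 ≤ t → t < u → u ≤ s → i (P t) ≠ i (P u)) := by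
  classical
  have hQ1 : ∃ s, ∃ P : ℕ → Fin n, IsWalkP A lam i s P :=
    ⟨s₀, isWalkP_of_seq A lam i s₀ j hj hw⟩
  have hQ2 : ∃ m, ∃ P : ℕ → Fin n, IsWalkP A lam i (Nat.find hQ1) P ∧
      m = n - 1 - (P 0).val := by
    obtain ⟨P, hP⟩ := Nat.find_spec hQ1
    exact ⟨_, P, hP, rfl⟩
  obtain ⟨P, hW, hm⟩ := Nat.find_spec hQ2
  set s := Nat.find hQ1 with hs_def
  have hG5 : ∀ u, 2 ≤ u → u ≤ s → ∀ k : Fin n, k < P u → i k ≠ i (P u) := by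
    intro u hu2 hus k hk hik
    have hW' := isWalkP_restart A lam i s P hW u (by omega) hus k hk hik
    have hlt : s - u + 1 < s := by have := hW.1; omega
    exact Nat.find_min hQ1 hlt ⟨_, hW'⟩
  have hG6 : ∀ k : Fin n, P 0 < k → k < P 1 → i k ≠ i (P 1) := by
    intro k h0k hk1 hik
    have hW' := isWalkP_restart A lam i s P hW 1 le_rfl hW.1 k hk1 hik
    have hs1 : s - 1 + 1 = s := by have := hW.1; omega
    rw [hs1] at hW'
    have hlt : n - 1 - k.val < Nat.find hQ2 := by
      rw [hm]
      have h1 : (P 0).val < k.val := h0k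
      have h2 : (P 1).val ≤ n - 1 := by have := (P 1).isLt; omega
      have h3 : k.val < (P 1).val := hk1
      omega
    exact Nat.find_min hQ2 hlt ⟨_, hW', rfl⟩
  refine ⟨s, P, hW, hG5, hG6, ?_⟩
  intro t u ht htu hus hik
  exact hG5 u (by omega) hus (P t) (hW.2.1 t u htu hus) hik

/-- Generic downward-recursive solution `w m = L m − Σ_{d<m} g m d · w d`. -/
def walkV (g : ℕ → ℕ → ℤ) (L : ℕ → ℤ) (m : ℕ) : ℤ :=
  L m - ∑ d ∈ (Finset.range m).attach, g m d.1 * walkV g L d.1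
termination_by m
decreasing_by exact Finset.mem_range.mp d.2

lemma walkV_eq (g : ℕ → ℕ → ℤ) (L : ℕ → ℤ) (m : ℕ) :
    walkV g L m = L m - ∑ d ∈ Finset.range m, g m d * walkV g L d := by
  rw [walkV]
  congr 1
  exact Finset.sum_attach (Finset.range m) (fun d => g m d * walkV g L d)

/-- The Cartier-type values along the walk: `vv t` for `1 ≤ t ≤ s`. -/
noncomputable def vvFun {r n : ℕ} (A : Matrix (Fin r) (Fin r) ℤ) (lam : Fin r → ℤ)
    (i : Fin n → Fin r) (s : ℕ) (P : ℕ → Fin n) (t : ℕ) : ℤ :=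
  walkV (fun m d => A (i (P (s - m))) (i (P (s - d)))) (fun m => lam (i (P (s - m)))) (s - t)

lemma vvFun_spec {r n : ℕ} (A : Matrix (Fin r) (Fin r) ℤ) (lam : Fin r → ℤ)
    (i : Fin n → Fin r) (s : ℕ) (P : ℕ → Fin n) (t : ℕ) (ht : t ≤ s) :
    vvFun A lam i s P t = lam (i (P t)) -
      ∑ u ∈ Finset.Icc (t + 1) s, A (i (P t)) (i (P u)) * vvFun A lam i s P u := by
  rw [vvFun, walkV_eq]
  have hst : s - (s - t) = t := by omega
  rw [hst]
  congr 1
  refine Finset.sum_nbij' (fun d => s - d) (fun u => s - u) ?_ ?_ ?_ ?_ ?_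
  · intro d hd
    simp only [Finset.mem_range] at hd
    simp only [Finset.mem_Icc]; omega
  · intro u hu
    simp only [Finset.mem_Icc] at hu
    simp only [Finset.mem_range]; omega
  · intro d hd
    simp only [Finset.mem_range] at hd; omega
  · intro u hu
    simp only [Finset.mem_Icc] at hu; omega
  · intro d hd
    simp only [Finset.mem_range] at hd
    have h1 : s - (s - d) = d := by omega
    rw [vvFun, h1]

lemma vvFun_pos {r n : ℕ} (A : Matrix (Fin r) (Fin r) ℤ) (lam : Fin r → ℤ)
    (i : Fin n → Fin r) (s : ℕ) (P : ℕ → Fin n)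
    (hA : IsCartanMatrix A) (hlam : ∀ a, 0 ≤ lam a)
    (hW : IsWalkP A lam i s P)
    (hdist : ∀ t u, 1 ≤ t → t < u → u ≤ s → i (P t) ≠ i (P u)) :
    ∀ t, 1 ≤ t → t ≤ s → 0 < vvFun A lam i s P t := by
  obtain ⟨hs, hmono, h01, hadj, hfin⟩ := hW
  have key : ∀ m : ℕ, ∀ t, 1 ≤ t → t ≤ s → s - t ≤ m → 0 < vvFun A lam i s P t := by
    intro m
    induction m with
    | zero =>
      intro t ht1 hts h
      have heq : t = s := by omega
      rw [heq]
      rw [vvFun_spec A lam i s P s le_rfl]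
      have : Finset.Icc (s + 1) s = ∅ := by
        apply Finset.Icc_eq_empty; omega
      rw [this, Finset.sum_empty]
      simpa using hfin
    | succ m ih =>
      intro t ht1 hts h
      by_cases hteq : t = s
      · rw [hteq]
        rw [vvFun_spec A lam i s P s le_rfl]
        have : Finset.Icc (s + 1) s = ∅ := by apply Finset.Icc_eq_empty; omega
        rw [this, Finset.sum_empty]
        simpa using hfin
      · have hts' : t < s := lt_of_le_of_ne hts hteq
        rw [vvFun_spec A lam i s P t hts]
        have hmem : t + 1 ∈ Finset.Icc (t + 1) s := by simp [Finset.mem_Icc]; omega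
        have hpos : ∀ u ∈ Finset.Icc (t + 1) s, 0 < vvFun A lam i s P u := by
          intro u hu
          simp only [Finset.mem_Icc] at hu
          exact ih u (by omega) hu.2 (by omega)
        have hnonpos : ∀ u ∈ Finset.Icc (t + 1) s,
            A (i (P t)) (i (P u)) * vvFun A lam i s P u ≤ 0 := by
          intro u hu
          have hu' := hu
          simp only [Finset.mem_Icc] at hu'
          have hne : i (P t) ≠ i (P u) := hdist t u ht1 (by omega) hu'.2
          have hAle : A (i (P t)) (i (P u)) ≤ 0 := hA.2.1 _ _ hne
          exact mul_nonpos_of_nonpos_of_nonneg hAle (le_of_lt (hpos u hu))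
        have hsum : ∑ u ∈ Finset.Icc (t + 1) s, A (i (P t)) (i (P u)) * vvFun A lam i s P u
            ≤ A (i (P t)) (i (P (t + 1))) * vvFun A lam i s P (t + 1) := by
          calc ∑ u ∈ Finset.Icc (t + 1) s, A (i (P t)) (i (P u)) * vvFun A lam i s P u
              = A (i (P t)) (i (P (t + 1))) * vvFun A lam i s P (t + 1) +
                ∑ u ∈ (Finset.Icc (t + 1) s).erase (t + 1),
                  A (i (P t)) (i (P u)) * vvFun A lam i s P u :=
                (Finset.add_sum_erase _ _ hmem).symm
            _ ≤ A (i (P t)) (i (P (t + 1))) * vvFun A lam i s P (t + 1) + 0 := by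
                gcongr
                exact Finset.sum_nonpos fun u hu =>
                  hnonpos u (Finset.mem_of_mem_erase hu)
            _ = _ := add_zero _
        have hadjle : A (i (P t)) (i (P (t + 1))) ≤ -1 := by
          have := hadj t ht1 hts'
          omega
        have hvpos : 0 < vvFun A lam i s P (t + 1) :=
          ih (t + 1) (by omega) (by omega) (by omega)
        have : A (i (P t)) (i (P (t + 1))) * vvFun A lam i s P (t + 1) ≤
            -vvFun A lam i s P (t + 1) := by nlinarith
        have hl := hlam (i (P t))
        omega
  intro t ht1 hts
  exact key (s - t) t ht1 hts le_rfl

/-- "if" direction.  With `A` a Cartan matrix, `i` a word,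
`λ` dominant, `c_{jk} = A_{i_j i_k}`, `ℓ_j = λ_{i_j}`: if some subword of `i`
is a hesitant `λ`-walk, then the Grossberg–Karshon twisted cube is twisted. -/
theorem statement7 {r n : ℕ} (A : Matrix (Fin r) (Fin r) ℤ)
    (hA : IsCartanMatrix A) (lam : Fin r → ℤ) (hlam : ∀ a, 0 ≤ lam a)
    (i : Fin n → Fin r) (s : ℕ) (j : Fin (s + 1) → Fin n) (hj : StrictMono j)
    (hw : IsHesitantLambdaWalkSeq A lam (i ∘ j)) :
    ¬ GKUntwisted (fun j k => A (i j) (i k)) (fun j => lam (i j)) := by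
  classical
  intro hU
  set c : Fin n → Fin n → ℤ := fun a b => A (i a) (i b) with hc
  set ℓ : Fin n → ℤ := fun a => lam (i a) with hℓ
  obtain ⟨s', P, hW, hG5, hG6, hG4⟩ := exists_min_walk A lam i s j hj hw
  obtain ⟨hs1, hmono, h01, hadj, hfin⟩ := hW
  set vv : ℕ → ℤ := vvFun A lam i s' P with hvv
  have hvvpos : ∀ t, 1 ≤ t → t ≤ s' → 0 < vv t :=
    vvFun_pos A lam i s' P hA hlam ⟨hs1, hmono, h01, hadj, hfin⟩ hG4
  have hv1R : (0 : ℝ) < (vv 1 : ℝ) := by exact_mod_cast hvvpos 1 le_rfl hs1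
  have hP0lt : ∀ u, 1 ≤ u → u ≤ s' → P 0 < P u := fun u h1 h2 => hmono 0 u h1 h2
  have hKV : ∀ t, t ≤ s' → (vv t : ℝ) = (ℓ (P t) : ℝ) -
      ∑ u ∈ Finset.Icc (t + 1) s', (c (P t) (P u) : ℝ) * (vv u : ℝ) := by
    intro t ht
    have h := vvFun_spec A lam i s' P t ht
    have h2 := congrArg (fun z : ℤ => (z : ℝ)) h
    push_cast at h2
    exact h2
  -- the point x
  set x : Fin n → ℝ := fun k =>
    (if k = P 0 then -((vv 1 : ℝ)) / 2 else 0) +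
    ∑ u ∈ Finset.Icc 1 s', (if k = P u then (vv u : ℝ) else 0) with hx
  have hx0 : x (P 0) = -((vv 1 : ℝ)) / 2 := by
    have h1 : (if P 0 = P 0 then -((vv 1 : ℝ)) / 2 else 0) = -((vv 1 : ℝ)) / 2 :=
      if_pos rfl
    have h2 : ∑ u ∈ Finset.Icc 1 s', (if P 0 = P u then (vv u : ℝ) else 0) = 0 :=
      Finset.sum_eq_zero fun u hu => if_neg
        (ne_of_lt (hP0lt u (Finset.mem_Icc.mp hu).1 (Finset.mem_Icc.mp hu).2))
    simp only [hx, if_true]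
    rw [h2, add_zero]
  have hxt : ∀ t, 1 ≤ t → t ≤ s' → x (P t) = (vv t : ℝ) := by
    intro t h1 h2
    simp only [hx]
    rw [if_neg (ne_of_gt (hP0lt t h1 h2)), zero_add]
    rw [Finset.sum_eq_single_of_mem t (by simp only [Finset.mem_Icc]; omega)]
    · rw [if_pos rfl]
    · intro u hu hut
      simp only [Finset.mem_Icc] at hu
      refine if_neg (fun he => hut ?_)
      rcases lt_trichotomy t u with h | h | h
      · exact absurd (hmono t u h hu.2) (by rw [he]; exact lt_irrefl _)
      · exact h.symm
      · exact absurd (hmono u t h h2) (by rw [he]; exact lt_irrefl _)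
  have hxoff : ∀ k : Fin n, (∀ t, t ≤ s' → k ≠ P t) → x k = 0 := by
    intro k hk
    simp only [hx]
    rw [if_neg (hk 0 (by omega)), zero_add]
    exact Finset.sum_eq_zero fun u hu => if_neg (hk u (Finset.mem_Icc.mp hu).2)
  have hxnn : ∀ k : Fin n, k ≠ P 0 → 0 ≤ x k := by
    intro k hk
    by_cases h : ∃ t, 1 ≤ t ∧ t ≤ s' ∧ k = P t
    · obtain ⟨t, h1, h2, rfl⟩ := h
      rw [hxt t h1 h2]
      exact_mod_cast le_of_lt (hvvpos t h1 h2)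
    · rw [hxoff k]
      intro t ht he
      rcases Nat.eq_zero_or_pos t with h0 | h0
      · exact hk (h0 ▸ he)
      · exact h ⟨t, h0, ht, he⟩
  -- master sum formula
  have hS : ∀ a : Fin n,
      ∑ k ∈ Finset.univ.filter (fun k => a < k), (c a k : ℝ) * x k =
      (if a < P 0 then (c a (P 0) : ℝ) * (-((vv 1 : ℝ)) / 2) else 0) +
      ∑ u ∈ (Finset.Icc 1 s').filter (fun u => a < P u),
        (c a (P u) : ℝ) * (vv u : ℝ) := by
    intro a
    have hterm : ∀ k : Fin n, (c a k : ℝ) * x k =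
        (if k = P 0 then (c a k : ℝ) * (-((vv 1 : ℝ)) / 2) else 0) +
        ∑ u ∈ Finset.Icc 1 s',
          (if k = P u then (c a k : ℝ) * (vv u : ℝ) else 0) := by
      intro k
      simp only [hx]
      rw [mul_add, Finset.mul_sum]
      congr 1
      · split <;> simp
      · exact Finset.sum_congr rfl fun u _ => by split <;> simp
    rw [Finset.sum_congr rfl fun k _ => hterm k, Finset.sum_add_distrib]
    congr 1
    · rw [Finset.sum_ite_eq' (Finset.univ.filter (fun k => a < k)) (P 0)
        (fun k => (c a k : ℝ) * (-((vv 1 : ℝ)) / 2))]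
      simp only [Finset.mem_filter, Finset.mem_univ, true_and]
    · rw [Finset.sum_comm]
      have h1 : ∀ u ∈ Finset.Icc 1 s',
          (∑ k ∈ Finset.univ.filter (fun k => a < k),
            if k = P u then (c a k : ℝ) * (vv u : ℝ) else 0) =
          (if a < P u then (c a (P u) : ℝ) * (vv u : ℝ) else 0) := by
        intro u _
        rw [Finset.sum_ite_eq' (Finset.univ.filter (fun k => a < k)) (P u)
          (fun k => (c a k : ℝ) * (vv u : ℝ))]
        simp only [Finset.mem_filter, Finset.mem_univ, true_and]
      rw [Finset.sum_congr rfl h1, ← Finset.sum_filter]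
  -- filter identities
  have hFt : ∀ t, 1 ≤ t → t ≤ s' →
      (Finset.Icc 1 s').filter (fun u => P t < P u) = Finset.Icc (t + 1) s' := by
    intro t h1 h2
    ext u
    simp only [Finset.mem_filter, Finset.mem_Icc]
    constructor
    · rintro ⟨⟨hu1, hu2⟩, hlt⟩
      refine ⟨?_, hu2⟩
      by_contra h
      push_neg at h
      rcases Nat.lt_or_ge u t with h' | h'
      · exact absurd (hmono u t h' h2) (lt_asymm hlt)
      · have : u = t := by omega
        rw [this] at hlt
        exact lt_irrefl _ hlt
    · rintro ⟨hu1, hu2⟩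
      exact ⟨⟨by omega, hu2⟩, hmono t u (by omega) hu2⟩
  have hF0 : (Finset.Icc 1 s').filter (fun u => P 0 < P u) = Finset.Icc 1 s' := by
    apply Finset.filter_true_of_mem
    intro u hu
    simp only [Finset.mem_Icc] at hu
    exact hP0lt u hu.1 hu.2
  have hErase : (Finset.Icc 1 s').erase 1 = Finset.Icc 2 s' := by
    ext u
    simp only [Finset.mem_erase, Finset.mem_Icc]
    omega
  have h2vv : A (i (P 1)) (i (P 1)) = 2 := hA.1 _
  -- the Icc 1 s' sum at the hesitation row
  have hRow : ∑ u ∈ Finset.Icc 1 s', (c (P 1) (P u) : ℝ) * (vv u : ℝ) =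
      (vv 1 : ℝ) + (ℓ (P 1) : ℝ) := by
    rw [← Finset.add_sum_erase _ _ (Finset.mem_Icc.mpr ⟨le_rfl, hs1⟩), hErase]
    have h2 : ∑ u ∈ Finset.Icc 2 s', (c (P 1) (P u) : ℝ) * (vv u : ℝ) =
        (ℓ (P 1) : ℝ) - (vv 1 : ℝ) := by
      have := hKV 1 hs1
      rw [show (1 : ℕ) + 1 = 2 from rfl] at this
      linarith
    rw [h2]
    have : (c (P 1) (P 1) : ℝ) = 2 := by
      rw [hc]; exact_mod_cast congrArg (fun z : ℤ => (z : ℝ)) h2vv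
    rw [this]
    ring
  -- GKA values
  have hGA0 : GKA c ℓ (P 0) x = -((vv 1 : ℝ)) := by
    rw [GKA, hS (P 0), if_neg (lt_irrefl _), hF0, zero_add]
    have hr : ∀ u ∈ Finset.Icc 1 s', (c (P 0) (P u) : ℝ) * (vv u : ℝ) =
        (c (P 1) (P u) : ℝ) * (vv u : ℝ) := by
      intro u _
      rw [hc]
      simp only
      rw [h01]
    rw [Finset.sum_congr rfl hr, hRow]
    have hl01 : (ℓ (P 0) : ℝ) = (ℓ (P 1) : ℝ) := by
      rw [hℓ]; simp only; rw [h01]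
    rw [hl01]
    ring
  have hGAt : ∀ t, 1 ≤ t → t ≤ s' → GKA c ℓ (P t) x = (vv t : ℝ) := by
    intro t h1 h2
    rw [GKA, hS (P t), if_neg (not_lt.mpr (le_of_lt (hP0lt t h1 h2))), hFt t h1 h2,
      zero_add]
    rw [hKV t h2]
  -- cube membership
  have hcube : x ∈ GKcube c ℓ := by
    intro a
    by_cases hwk : ∃ t, t ≤ s' ∧ a = P t
    · obtain ⟨t, ht, rfl⟩ := hwk
      rcases Nat.eq_zero_or_pos t with h0 | h0
      · subst h0
        left
        rw [hGA0, hx0]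
        constructor <;> linarith
      · right
        rw [hGAt t h0 ht, hxt t h0 ht]
        have := hvvpos t h0 ht
        constructor
        · exact_mod_cast le_of_lt this
        · exact le_rfl
    · -- off-walk
      push_neg at hwk
      have hxa : x a = 0 := hxoff a fun t ht => hwk t ht
      right
      rw [hxa]
      refine ⟨le_rfl, ?_⟩
      rw [GKA, hS a]
      set F := (Finset.Icc 1 s').filter (fun u => a < P u) with hF
      by_cases hia : i a = i (P 1)
      · by_cases ha0 : a < P 0
        · -- equals zero exactly
          have hFeq : F = Finset.Icc 1 s' := by
            rw [hF]
            apply Finset.filter_true_of_mem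
            intro u hu
            simp only [Finset.mem_Icc] at hu
            exact lt_trans ha0 (hP0lt u hu.1 hu.2)
          have hc0 : (c a (P 0) : ℝ) = 2 := by
            show ((A (i a) (i (P 0)) : ℤ) : ℝ) = 2
            rw [hia, h01]
            exact_mod_cast h2vv
          have hr : ∀ u ∈ Finset.Icc 1 s', (c a (P u) : ℝ) * (vv u : ℝ) =
              (c (P 1) (P u) : ℝ) * (vv u : ℝ) := by
            intro u _
            rw [hc]
            simp only
            rw [hia]
          rw [hFeq, Finset.sum_congr rfl hr, hRow, if_pos ha0, hc0]
          have hla : (ℓ a : ℝ) = (ℓ (P 1) : ℝ) := by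
            rw [hℓ]; simp only; rw [hia]
          rw [hla]
          ring_nf
          linarith [le_refl (0:ℝ)]
        · -- a > P 1, all terms nonpositive
          have ha1 : P 1 < a := by
            rcases lt_trichotomy a (P 1) with h | h | h
            · exfalso
              have h0a : P 0 < a := by
                rcases lt_trichotomy a (P 0) with h' | h' | h'
                · exact absurd h' ha0
                · exact absurd h' (hwk 0 (by omega))
                · exact h'
              exact hG6 a h0a h hia
            · exact absurd h (hwk 1 hs1)
            · exact h
          rw [if_neg ha0, zero_add]
          have hnp : ∀ u ∈ F, (c a (P u) : ℝ) * (vv u : ℝ) ≤ 0 := by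
            intro u hu
            rw [hF, Finset.mem_filter, Finset.mem_Icc] at hu
            obtain ⟨⟨hu1, hu2⟩, hau⟩ := hu
            have hu2' : 2 ≤ u := by
              rcases Nat.lt_or_ge u 2 with h | h
              · interval_cases u
                exact absurd hau (lt_asymm ha1)
              · exact h
            have hne : i a ≠ i (P u) := by
              rw [hia]
              exact hG4 1 u le_rfl (by omega) hu2
            have hAle : (c a (P u) : ℝ) ≤ 0 := by
              rw [hc]
              exact_mod_cast hA.2.1 _ _ hne
            have hvnn : (0:ℝ) ≤ (vv u : ℝ) := by
              exact_mod_cast le_of_lt (hvvpos u hu1 hu2)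
            exact mul_nonpos_of_nonpos_of_nonneg hAle hvnn
          have := Finset.sum_nonpos hnp
          have hl := hlam (i a)
          have hlR : (0:ℝ) ≤ (ℓ a : ℝ) := by
            rw [hℓ]; exact_mod_cast hl
          linarith
      · -- i a not the hesitation letter
        have hnp : ∀ u ∈ F, (c a (P u) : ℝ) * (vv u : ℝ) ≤ 0 := by
          intro u hu
          rw [hF, Finset.mem_filter, Finset.mem_Icc] at hu
          obtain ⟨⟨hu1, hu2⟩, hau⟩ := hu
          have hne : i a ≠ i (P u) := by
            rcases Nat.lt_or_ge u 2 with h | h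
            · interval_cases u
              exact hia
            · exact hG5 u h hu2 a hau
          have hAle : (c a (P u) : ℝ) ≤ 0 := by
            rw [hc]
            exact_mod_cast hA.2.1 _ _ hne
          have hvnn : (0:ℝ) ≤ (vv u : ℝ) := by
            exact_mod_cast le_of_lt (hvvpos u hu1 hu2)
          exact mul_nonpos_of_nonpos_of_nonneg hAle hvnn
        have hlR : (0:ℝ) ≤ (ℓ a : ℝ) := by
          rw [hℓ]; exact_mod_cast hlam (i a)
        by_cases ha0 : a < P 0
        · have h1F : 1 ∈ F := by
            rw [hF, Finset.mem_filter, Finset.mem_Icc]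
            exact ⟨⟨le_rfl, hs1⟩, lt_trans ha0 (hP0lt 1 le_rfl hs1)⟩
          have hsplit : ∑ u ∈ F, (c a (P u) : ℝ) * (vv u : ℝ) =
              (c a (P 1) : ℝ) * (vv 1 : ℝ) +
              ∑ u ∈ F.erase 1, (c a (P u) : ℝ) * (vv u : ℝ) :=
            (Finset.add_sum_erase _ _ h1F).symm
          have htail : ∑ u ∈ F.erase 1, (c a (P u) : ℝ) * (vv u : ℝ) ≤ 0 :=
            Finset.sum_nonpos fun u hu => hnp u (Finset.mem_of_mem_erase hu)
          have hc01 : (c a (P 0) : ℝ) = (c a (P 1) : ℝ) := by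
            rw [hc]
            simp only
            rw [h01]
          have hcneg : (c a (P 1) : ℝ) ≤ 0 := by
            rw [hc]
            exact_mod_cast hA.2.1 _ _ hia
          rw [if_pos ha0, hsplit, hc01]
          nlinarith [hv1R]
        · rw [if_neg ha0, zero_add]
          have := Finset.sum_nonpos hnp
          linarith
  -- evaluate rho
  have hrho : GKrho c ℓ x = -1 := by
    rw [GKrho, if_pos hcube]
    have hsgn0 : GKsgn (x (P 0)) = 1 := by
      rw [GKsgn, if_pos]
      rw [hx0]
      linarith
    have hsgnk : ∀ k ∈ Finset.univ.erase (P 0), GKsgn (x k) = -1 := by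
      intro k hk
      have hne : k ≠ P 0 := (Finset.mem_erase.mp hk).1
      rw [GKsgn, if_neg (not_lt.mpr (hxnn k hne))]
    have hprod : ∏ k : Fin n, GKsgn (x k) = (-1 : ℝ) ^ (n - 1) := by
      rw [← Finset.mul_prod_erase Finset.univ _ (Finset.mem_univ (P 0)), hsgn0,
        one_mul, Finset.prod_congr rfl hsgnk, Finset.prod_const,
        Finset.card_erase_of_mem (Finset.mem_univ _), Finset.card_univ,
        Fintype.card_fin]
    rw [hprod, ← pow_add]
    have hn1 : 1 ≤ n := (P 0).pos
    have : n + (n - 1) = 2 * (n - 1) + 1 := by omega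
    rw [this]
    exact Odd.neg_one_pow ⟨n - 1, by ring⟩
  have := hU.2.2.2 x hcube
  rw [hrho] at this
  norm_num at this
end

section
/- Let A be the Cartan matrix of a complex semisimple Lie algebra of rank r, let I = (i_1,…,i_n) be a word with entries in {1,…,r}, and let λ = (λ_1,…,λ_r) be a dominant weight; set c_{jk} = A_{i_j i_k} and ℓ_j = λ_{i_j}, and let m_σ be the associated integer vectors. If there exist σ ∈ {+,−}^n and k ∈ {1,…,n} such that m_{σ,k} > 0 and m_{σ,i} ≥ 0 for all i > k, then there exists a subword J = (i_{j_1}, i_{j_2}, …, i_{j_s}) of I, of length s ≥ 1, such that j_1 = k and J is a λ-walk (i.e. J is a diagram walk whose final root satisfies λ_{i_{j_s}} > 0). -/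
open Finset

/-- With `A` a Cartan matrix, `i` a word, `λ` dominant,
`c_{jk} = A_{i_j i_k}`, `ℓ_j = λ_{i_j}`: if there are `σ ∈ {+,−}^n` and `k`
with `m_{σ,k} > 0` and `m_{σ,p} ≥ 0` for all `p > k`, then there is a subword
`J = (i_{j_1}, …, i_{j_s})` of `i` with `s ≥ 1`, `j_1 = k`, which is a
`λ`-walk. -/
theorem statement8 {r n : ℕ} (A : Matrix (Fin r) (Fin r) ℤ)
    (hA : IsCartanMatrix A) (lam : Fin r → ℤ) (hlam : ∀ a, 0 ≤ lam a)
    (i : Fin n → Fin r) (σ : Fin n → Bool) (k : Fin n)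
    (hk : 0 < GKm (fun j k => A (i j) (i k)) (fun j => lam (i j)) σ k)
    (hge : ∀ p : Fin n, k < p →
      0 ≤ GKm (fun j k => A (i j) (i k)) (fun j => lam (i j)) σ p) :
    ∃ (s : ℕ) (j : Fin (s + 1) → Fin n), StrictMono j ∧ j 0 = k ∧
      IsLambdaWalkSeq A lam (i ∘ j) := by
  set c : Fin n → Fin n → ℤ := fun j k => A (i j) (i k) with hc
  set ℓ : Fin n → ℤ := fun j => lam (i j) with hℓ
  suffices H : ∀ m : ℕ, ∀ k : Fin n, n - k.val ≤ m → 0 < GKm c ℓ σ k →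
      (∀ p : Fin n, k < p → 0 ≤ GKm c ℓ σ p) →
      ∃ (s : ℕ) (j : Fin (s + 1) → Fin n), StrictMono j ∧ j 0 = k ∧
        IsLambdaWalkSeq A lam (i ∘ j) by
    exact H n k (by omega) hk hge
  intro m
  induction m with
  | zero => intro k hle; have := k.isLt; omega
  | succ m IH =>
    intro k hle hk hge
    by_cases hlk : 0 < lam (i k)
    · refine ⟨0, fun _ => k, fun a b hab => absurd (Fin.ext (by omega) : a = b) (ne_of_lt hab),
        rfl, fun t => t.elim0, by simpa⟩
    · have hlk0 : lam (i k) = 0 := le_antisymm (not_lt.mp hlk) (hlam (i k))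
      rw [GKm] at hk
      by_cases hσ : σ k
      · rw [if_pos hσ] at hk
        have hsum : ∑ s ∈ (Finset.univ.filter fun s : Fin n => k < s).attach,
            c k s.1 * GKm c ℓ σ s.1 < 0 := by
          have : ℓ k = 0 := hlk0
          omega
        have hterm : ∃ s ∈ (Finset.univ.filter fun s : Fin n => k < s).attach,
            c k s.1 * GKm c ℓ σ s.1 < 0 := by
          by_contra hcon
          push_neg at hcon
          exact absurd (Finset.sum_nonneg hcon) (not_le.mpr hsum)
        obtain ⟨s, -, hs⟩ := hterm
        have hks : k < s.1 := by
          have := s.2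
          simp only [Finset.mem_filter, Finset.mem_univ, true_and] at this
          exact this
        have hms : 0 ≤ GKm c ℓ σ s.1 := hge s.1 hks
        have hmpos : 0 < GKm c ℓ σ s.1 := by
          rcases lt_or_eq_of_le hms with h | h
          · exact h
          · rw [← h, mul_zero] at hs; omega
        have hcneg : c k s.1 < 0 := by nlinarith
        have hge' : ∀ p : Fin n, s.1 < p → 0 ≤ GKm c ℓ σ p :=
          fun p hp => hge p (lt_trans hks hp)
        have hle' : n - s.1.val ≤ m := by
          have h1 : k.val < s.1.val := hks
          have := s.1.isLt
          omega
        obtain ⟨s', j', hmono, hj0, hw1, hw2⟩ := IH s.1 hle' hmpos hge'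
        refine ⟨s' + 1, Fin.cons k j', ?_, Fin.cons_zero _ _, ?_, ?_⟩
        · rw [Fin.strictMono_iff_lt_succ]
          intro t
          induction t using Fin.cases with
          | zero =>
            simpa using (hj0 ▸ hks : k < j' 0)
          | succ u =>
            rw [← Fin.succ_castSucc, Fin.cons_succ, Fin.cons_succ]
            exact hmono (Fin.castSucc_lt_succ (i := u))
        · intro t
          induction t using Fin.cases with
          | zero =>
            have h0 : (Fin.cons k j' : Fin (s' + 2) → Fin n) (Fin.castSucc 0) = k := by
              simp
            have h1 : (Fin.cons k j' : Fin (s' + 2) → Fin n) (Fin.succ 0) = s.1 := by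
              rw [Fin.cons_succ, hj0]
            constructor
            · intro heq
              simp only [Function.comp_apply, h0, h1] at heq
              have : c k s.1 = 2 := by
                rw [hc]; simp only; rw [heq]; exact hA.1 _
              omega
            · simp only [Function.comp_apply, h0, h1]
              exact hcneg
          | succ u =>
            have := hw1 u
            rw [← Fin.succ_castSucc]
            simpa only [Function.comp_apply, Fin.cons_succ] using this
        · have hlast : (Fin.last (s' + 1)) = Fin.succ (Fin.last s') :=
            (Fin.succ_last s').symm
          rw [hlast]
          simpa only [Function.comp_apply, Fin.cons_succ] using hw2
      · rw [if_neg hσ] at hk; omega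
end

section
/- Let A be the Cartan matrix of a complex semisimple Lie algebra of rank r, let I = (i_1,…,i_n) be a word with entries in {1,…,r}, and let λ = (λ_1,…,λ_r) be a dominant weight; let (C(c,ℓ), ρ) be the associated Grossberg–Karshon twisted cube (c_{jk} = A_{i_j i_k}, ℓ_j = λ_{i_j}). If I contains a subword J = (i_{j_0}, i_{j_1}) of length 2 which is a hesitant λ-walk (i.e. i_{j_0} = i_{j_1} and λ_{i_{j_1}} > 0), then (C(c,ℓ), ρ) is twisted. -/
open Finset

/-- With `A` a Cartan matrix, `i` a word, `λ` dominant,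
`c_{jk} = A_{i_j i_k}`, `ℓ_j = λ_{i_j}`: if `i` contains a subword
`(i_{j_0}, i_{j_1})` of length `2` which is a hesitant `λ`-walk (i.e.
`i_{j_0} = i_{j_1}` and `λ_{i_{j_1}} > 0`), then the Grossberg–Karshon twisted
cube is twisted. -/
theorem statement9 {r n : ℕ} (A : Matrix (Fin r) (Fin r) ℤ)
    (hA : IsCartanMatrix A) (lam : Fin r → ℤ) (hlam : ∀ a, 0 ≤ lam a)
    (i : Fin n → Fin r) (j0 j1 : Fin n) (h01 : j0 < j1)
    (heq : i j0 = i j1) (hpos : 0 < lam (i j1)) :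
    ¬ GKUntwisted (fun j k => A (i j) (i k)) (fun j => lam (i j)) := by
  obtain ⟨hdiag, hoff, -, -⟩ := hA
  rintro ⟨-, -, -, hrho⟩
  classical
  -- choose m = maximal index < j1 with i m = i j1
  set S : Finset (Fin n) := Finset.univ.filter (fun j => j < j1 ∧ i j = i j1) with hS
  have hj0S : j0 ∈ S := by simp [hS, h01, heq]
  have hSne : S.Nonempty := ⟨j0, hj0S⟩
  set m := S.max' hSne with hm
  have hmS : m ∈ S := S.max'_mem hSne
  have hm1 : m < j1 := by
    have := hmS; simp only [hS, Finset.mem_filter] at this; exact this.2.1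
  have hmi : i m = i j1 := by
    have := hmS; simp only [hS, Finset.mem_filter] at this; exact this.2.2
  have hmax : ∀ j : Fin n, m < j → j < j1 → i j ≠ i j1 := by
    intro j hmj hjj1 hij
    have hjS : j ∈ S := by simp [hS, hjj1, hij]
    exact absurd (S.le_max' j hjS) (not_le.mpr hmj)
  set L : ℤ := lam (i j1) with hLdef
  have hL : 1 ≤ L := hpos
  have hL1 : (1 : ℝ) ≤ (L : ℝ) := by exact_mod_cast hL
  have hm_ne : m ≠ j1 := ne_of_lt hm1
  set x : Fin n → ℝ := fun k => if k = j1 then (L : ℝ) else if k = m then -(L : ℝ)/2 else 0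
    with hx
  have hxj1 : x j1 = (L : ℝ) := by simp [hx]
  have hxm : x m = -(L : ℝ)/2 := by simp [hx, hm_ne]
  have hx0 : ∀ k, k ≠ j1 → k ≠ m → x k = 0 := by
    intro k h1 h2; simp [hx, h1, h2]
  have hsum : ∀ j : Fin n,
      GKA (fun a b => A (i a) (i b)) (fun a => lam (i a)) j x
        = (lam (i j) : ℝ) -
          ((if j < j1 then (A (i j) (i j1) : ℝ) * L else 0)
            + (if j < m then (A (i j) (i m) : ℝ) * (-(L : ℝ)/2) else 0)) := by
    intro j
    unfold GKA
    congr 1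
    have hpt : ∀ k ∈ Finset.univ.filter (fun k : Fin n => j < k),
        (A (i j) (i k) : ℝ) * x k
          = (if k = j1 then (A (i j) (i j1) : ℝ) * L else 0)
            + (if k = m then (A (i j) (i m) : ℝ) * (-(L : ℝ)/2) else 0) := by
      intro k _
      by_cases h1 : k = j1
      · subst h1; simp [hxj1, hm_ne, hm_ne.symm]
      · by_cases h2 : k = m
        · subst h2; simp [hxm, hm_ne, h1]
        · simp [h1, h2, hx0 k h1 h2]
    rw [Finset.sum_congr rfl hpt, Finset.sum_add_distrib,
        Finset.sum_ite_eq' _ j1 (fun _ => (A (i j) (i j1) : ℝ) * L),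
        Finset.sum_ite_eq' _ m (fun _ => (A (i j) (i m) : ℝ) * (-(L : ℝ)/2))]
    simp [Finset.mem_filter]
  have hxcube : x ∈ GKcube (fun a b => A (i a) (i b)) (fun a => lam (i a)) := by
    intro j
    rcases lt_trichotomy j m with hjm | hjm | hjm
    · -- j < m
      right
      have hjj1 : j < j1 := hjm.trans hm1
      have hxj : x j = 0 := hx0 j (ne_of_lt hjj1) (ne_of_lt hjm)
      rw [hsum j, hxj, if_pos hjj1, if_pos hjm]
      refine ⟨le_refl 0, ?_⟩
      have him : (A (i j) (i m) : ℝ) = (A (i j) (i j1) : ℝ) := by rw [hmi]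
      by_cases hij : i j = i j1
      · have h2 : A (i j) (i j1) = 2 := by rw [hij]; exact hdiag _
        have hll : lam (i j) = L := by rw [hij]
        rw [him, h2, hll]; push_cast; linarith
      · have hc : (A (i j) (i j1) : ℝ) ≤ 0 := by exact_mod_cast hoff _ _ hij
        have hcL : (A (i j) (i j1) : ℝ) * L ≤ 0 :=
          mul_nonpos_of_nonpos_of_nonneg hc (by linarith)
        have hl : (0 : ℝ) ≤ (lam (i j) : ℝ) := by exact_mod_cast hlam (i j)
        rw [him]
        nlinarith
    · -- j = m
      left
      subst hjm
      rw [hsum m, hxm, if_pos hm1, if_neg (lt_irrefl m)]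
      have h2 : A (i m) (i j1) = 2 := by rw [hmi]; exact hdiag _
      have hll : lam (i m) = L := by rw [hmi]
      rw [h2, hll]
      constructor <;> push_cast <;> linarith
    · -- m < j
      rcases lt_trichotomy j j1 with hjj1 | hjj1 | hjj1
      · right
        have hxj : x j = 0 := hx0 j (ne_of_lt hjj1) (ne_of_gt hjm)
        rw [hsum j, hxj, if_pos hjj1, if_neg (not_lt.mpr hjm.le)]
        refine ⟨le_refl 0, ?_⟩
        have hij : i j ≠ i j1 := hmax j hjm hjj1
        have hc : (A (i j) (i j1) : ℝ) ≤ 0 := by exact_mod_cast hoff _ _ hij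
        have hcL : (A (i j) (i j1) : ℝ) * L ≤ 0 :=
          mul_nonpos_of_nonpos_of_nonneg hc (by linarith)
        have hl : (0 : ℝ) ≤ (lam (i j) : ℝ) := by exact_mod_cast hlam (i j)
        nlinarith
      · right
        subst hjj1
        rw [hsum j, hxj1, if_neg (lt_irrefl j), if_neg (not_lt.mpr hm1.le)]
        constructor <;> [linarith; linarith]
      · right
        have hxj : x j = 0 := hx0 j (ne_of_gt hjj1) (ne_of_gt (hm1.trans hjj1))
        rw [hsum j, hxj, if_neg (not_lt.mpr hjj1.le),
          if_neg (not_lt.mpr (hm1.trans hjj1).le)]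
        have hl : (0 : ℝ) ≤ (lam (i j) : ℝ) := by exact_mod_cast hlam (i j)
        exact ⟨le_refl 0, by linarith⟩
  have hprod : ∏ k : Fin n, GKsgn (x k) = (-1 : ℝ) ^ (n - 1) := by
    have hf : ∀ k : Fin n, GKsgn (x k) = if k = m then (1 : ℝ) else -1 := by
      intro k
      by_cases h2 : k = m
      · subst h2; rw [if_pos rfl, hxm]; unfold GKsgn; rw [if_pos (by linarith)]
      · rw [if_neg h2]; unfold GKsgn
        by_cases h1 : k = j1
        · subst h1; rw [hxj1, if_neg (by linarith)]
        · rw [hx0 k h1 h2, if_neg (by norm_num)]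
    calc ∏ k : Fin n, GKsgn (x k)
        = ∏ k : Fin n, (if k = m then (1 : ℝ) else -1) :=
          Finset.prod_congr rfl (fun k _ => hf k)
      _ = (if m = m then (1 : ℝ) else -1)
          * ∏ k ∈ Finset.univ.erase m, (if k = m then (1 : ℝ) else -1) :=
          (Finset.mul_prod_erase Finset.univ _ (Finset.mem_univ m)).symm
      _ = ∏ k ∈ Finset.univ.erase m, (-1 : ℝ) := by
          rw [if_pos rfl, one_mul]
          exact Finset.prod_congr rfl (fun k hk => if_neg (Finset.ne_of_mem_erase hk))
      _ = (-1 : ℝ) ^ (n - 1) := by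
          rw [Finset.prod_const, Finset.card_erase_of_mem (Finset.mem_univ m),
            Finset.card_univ, Fintype.card_fin]
  have hrx := hrho x hxcube
  rw [GKrho, if_pos hxcube, hprod, ← pow_add] at hrx
  have hn : 0 < n := j1.pos
  have hodd : Odd (n + (n - 1)) := ⟨n - 1, by omega⟩
  rw [hodd.neg_one_pow] at hrx
  linarith
end

section
/- Let A be the Cartan matrix of a complex semisimple Lie algebra of rank r, let I = (i_1,…,i_n) be a word with entries in {1,…,r}, and let λ = (λ_1,…,λ_r) be a dominant weight; set c_{jk} = A_{i_j i_k} and ℓ_j = λ_{i_j}, and let m_σ be the associated integer vectors. Suppose J = (i_{j_0}, i_{j_1}, …, i_{j_s}) is a subword of I (j_0 < j_1 < ⋯ < j_s) which is a minimal hesitant λ-walk with s ≥ 2, and define σ ∈ {+,−}^n by σ_p = − if p ∈ {j_0, j_1, …, j_s} and σ_p = + otherwise. Then: m_{σ,p} = 0 for all p ∉ {j_0,…,j_s}; m_{σ,j_s} = ℓ_{j_s} > 0; m_{σ,j_t} = −c_{j_t j_{t+1}} m_{σ,j_{t+1}} for 1 ≤ t ≤ s−1; and m_{σ,j_0} = −(2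 m_{σ,j_1} + c_{j_0 j_2} m_{σ,j_2}). -/
open Finset

section Aux

lemma GKm_of_neg {n : ℕ} (c : Fin n → Fin n → ℤ) (ℓ : Fin n → ℤ) (σ : Fin n → Bool)
    (k : Fin n) (hk : σ k = false) : GKm c ℓ σ k = 0 := by
  rw [GKm, hk]; simp

lemma GKm_of_pos {n : ℕ} (c : Fin n → Fin n → ℤ) (ℓ : Fin n → ℤ) (σ : Fin n → Bool)
    (k : Fin n) (hk : σ k = true) :
    GKm c ℓ σ k = ℓ k - ∑ q ∈ Finset.univ.filter (fun q : Fin n => k < q),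
      c k q * GKm c ℓ σ q := by
  rw [GKm, if_pos hk]
  congr 1
  exact Finset.sum_attach _ (fun q => c k q * GKm c ℓ σ q)

lemma GKm_zero_of_not_mem {n N : ℕ} (c : Fin n → Fin n → ℤ) (ℓ : Fin n → ℤ)
    (σ : Fin n → Bool) (j : Fin N → Fin n) (hσ : ∀ p, σ p = true ↔ ∃ t, j t = p)
    (p : Fin n) (hp : ∀ t, j t ≠ p) : GKm c ℓ σ p = 0 := by
  apply GKm_of_neg
  rcases h : σ p with _ | _
  · rfl
  · obtain ⟨t, ht⟩ := (hσ p).1 h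
    exact absurd ht (hp t)

/-- The recursion for `GKm` restricted to the image of a strictly monotone `j`. -/
lemma GKm_image {n N : ℕ} (c : Fin n → Fin n → ℤ) (ℓ : Fin n → ℤ) (σ : Fin n → Bool)
    (j : Fin N → Fin n) (hj : StrictMono j) (hσ : ∀ p, σ p = true ↔ ∃ t, j t = p)
    (t : Fin N) :
    GKm c ℓ σ (j t) = ℓ (j t) -
      ∑ u ∈ Finset.univ.filter (fun u : Fin N => t < u), c (j t) (j u) * GKm c ℓ σ (j u) := by
  rw [GKm_of_pos c ℓ σ (j t) ((hσ (j t)).2 ⟨t, rfl⟩)]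
  congr 1
  have hsub : (Finset.univ.filter (fun u : Fin N => t < u)).image j ⊆
      Finset.univ.filter (fun q : Fin n => j t < q) := by
    intro q hq
    simp only [Finset.mem_image, Finset.mem_filter, Finset.mem_univ, true_and] at hq ⊢
    obtain ⟨u, htu, rfl⟩ := hq
    exact hj htu
  have hz : ∀ q ∈ Finset.univ.filter (fun q : Fin n => j t < q),
      q ∉ (Finset.univ.filter (fun u : Fin N => t < u)).image j →
      c (j t) q * GKm c ℓ σ q = 0 := by
    intro q hq hq'
    rw [Finset.mem_filter] at hq
    have hq2 : ∀ u : Fin N, j u ≠ q := by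
      intro u hu
      apply hq'
      rw [Finset.mem_image]
      refine ⟨u, ?_, hu⟩
      rw [Finset.mem_filter]
      have hlt : j t < j u := by rw [hu]; exact hq.2
      exact ⟨Finset.mem_univ u, hj.lt_iff_lt.1 hlt⟩
    rw [GKm_zero_of_not_mem c ℓ σ j hσ q hq2, mul_zero]
  rw [← Finset.sum_subset hsub hz, Finset.sum_image (fun x _ y _ h => hj.injective h)]

/-- A row bound: if node `p` of an injectively embedded set has two distinct
neighbours in the set, the corresponding row sum of the Cartan matrix is nonpositive. -/
lemma row_bound {r k : ℕ} {A : Matrix (Fin r) (Fin r) ℤ}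
    (hdiag : ∀ a, A a a = 2) (hoff : ∀ a b, a ≠ b → A a b ≤ 0)
    (c : Fin k → Fin r) (hcinj : Function.Injective c)
    (p q1 q2 : Fin k) (h12 : q1 ≠ q2) (h1p : q1 ≠ p) (h2p : q2 ≠ p)
    (hb1 : A (c p) (c q1) < 0) (hb2 : A (c p) (c q2) < 0) :
    ∑ q : Fin k, A (c p) (c q) ≤ 0 := by
  have hsub : ({p, q1, q2} : Finset (Fin k)) ⊆ Finset.univ := Finset.subset_univ _
  rw [← Finset.sum_sdiff hsub]
  have e1 : ∑ q ∈ ({p, q1, q2} : Finset (Fin k)), A (c p) (c q)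
      = A (c p) (c p) + (A (c p) (c q1) + A (c p) (c q2)) := by
    rw [Finset.sum_insert (by simp [h1p.symm, h2p.symm]),
      Finset.sum_insert (by simp [h12]), Finset.sum_singleton]
  have e2 : ∑ q ∈ (Finset.univ \ ({p, q1, q2} : Finset (Fin k))), A (c p) (c q) ≤ 0 := by
    apply Finset.sum_nonpos
    intro q hq
    simp only [Finset.mem_sdiff, Finset.mem_univ, true_and, Finset.mem_insert,
      Finset.mem_singleton, not_or] at hq
    exact hoff _ _ (fun h => hq.1 (hcinj h).symm)
  rw [e1, hdiag]
  omega

/-- There are no cycles in the Dynkin diagram of a Cartan matrix. -/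
lemma no_cycle {r k : ℕ} {A : Matrix (Fin r) (Fin r) ℤ} (hA : IsCartanMatrix A)
    (hk : 3 ≤ k) (c : Fin k → Fin r) (hcinj : Function.Injective c)
    (hadj : ∀ p : ℕ, (h : p + 1 < k) → A (c ⟨p, by omega⟩) (c ⟨p + 1, h⟩) < 0)
    (hback : A (c ⟨k - 1, by omega⟩) (c ⟨0, by omega⟩) < 0) : False := by
  obtain ⟨hdiag, hoff, hsym0, d, hd, hdsym, hpos⟩ := hA
  have hrev : ∀ p q : Fin k, p ≠ q → A (c p) (c q) < 0 → A (c q) (c p) < 0 := by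
    intro p q hpq h
    have hne : c q ≠ c p := fun h' => hpq (hcinj h').symm
    have h0 : A (c q) (c p) ≠ 0 := by
      intro h0
      have := (hsym0 (c q) (c p)).1 h0
      omega
    have := hoff (c q) (c p) hne
    omega
  -- every row sum over the cycle is nonpositive
  have hrow : ∀ p : Fin k, ∑ q : Fin k, A (c p) (c q) ≤ 0 := by
    rintro ⟨v, hv⟩
    have hne01 : ∀ (a b : ℕ) (ha : a < k) (hb : b < k), a ≠ b →
        (⟨a, ha⟩ : Fin k) ≠ ⟨b, hb⟩ := fun a b ha hb h => Fin.ne_of_val_ne h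
    rcases Nat.eq_zero_or_pos v with h0 | h0
    · subst h0
      exact row_bound hdiag hoff c hcinj ⟨0, hv⟩ ⟨1, by omega⟩ ⟨k - 1, by omega⟩
        (hne01 _ _ _ _ (by omega)) (hne01 _ _ _ _ (by omega)) (hne01 _ _ _ _ (by omega))
        (hadj 0 (by omega))
        (hrev _ _ (hne01 _ _ _ _ (by omega)) hback)
    · rcases Nat.lt_or_ge v (k - 1) with h1 | h1
      · refine row_bound hdiag hoff c hcinj ⟨v, hv⟩ ⟨v - 1, by omega⟩ ⟨v + 1, by omega⟩
          (hne01 _ _ _ _ (by omega)) (hne01 _ _ _ _ (by omega)) (hne01 _ _ _ _ (by omega))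
          ?_ (hadj v (by omega))
        have h2 := hrev ⟨v - 1, by omega⟩ ⟨v - 1 + 1, by omega⟩ (hne01 _ _ _ _ (by omega))
          (hadj (v - 1) (by omega))
        have e : (⟨v - 1 + 1, by omega⟩ : Fin k) = ⟨v, hv⟩ := Fin.ext (show v - 1 + 1 = v by omega)
        rwa [e] at h2
      · have hv1 : v = k - 1 := by omega
        subst hv1
        refine row_bound hdiag hoff c hcinj ⟨k - 1, hv⟩ ⟨k - 2, by omega⟩ ⟨0, by omega⟩
          (hne01 _ _ _ _ (by omega)) (hne01 _ _ _ _ (by omega)) (hne01 _ _ _ _ (by omega))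
          ?_ hback
        have h2 := hrev ⟨k - 2, by omega⟩ ⟨k - 2 + 1, by omega⟩ (hne01 _ _ _ _ (by omega))
          (hadj (k - 2) (by omega))
        have e : (⟨k - 2 + 1, by omega⟩ : Fin k) = ⟨k - 1, hv⟩ :=
          Fin.ext (show k - 2 + 1 = k - 1 by omega)
        rwa [e] at h2
  -- the indicator vector of the cycle contradicts positive definiteness
  set x : Fin r → ℚ := fun a => if a ∈ Finset.image c Finset.univ then 1 else 0 with hx
  have hx1 : ∀ p : Fin k, x (c p) = 1 := fun p =>
    if_pos (Finset.mem_image_of_mem c (Finset.mem_univ p))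
  have hxne : x ≠ 0 := by
    intro h
    have h2 := congrFun h (c ⟨0, by omega⟩)
    rw [hx1] at h2
    simp at h2
  have hquad := hpos x hxne
  have e1 : ∑ a, ∑ b, x a * d a * (A a b : ℚ) * x b
      = ∑ p : Fin k, ∑ q : Fin k, d (c p) * (A (c p) (c q) : ℚ) := by
    have hz1 : ∀ a ∈ (Finset.univ : Finset (Fin r)), a ∉ Finset.image c Finset.univ →
        (∑ b, x a * d a * (A a b : ℚ) * x b) = 0 := by
      intro a _ ha
      have hxa : x a = 0 := if_neg ha
      simp [hxa]
    rw [← Finset.sum_subset (Finset.subset_univ _) hz1]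
    rw [Finset.sum_image (fun p _ q _ h => hcinj h)]
    apply Finset.sum_congr rfl
    intro p _
    have hz2 : ∀ b ∈ (Finset.univ : Finset (Fin r)), b ∉ Finset.image c Finset.univ →
        x (c p) * d (c p) * (A (c p) b : ℚ) * x b = 0 := by
      intro b _ hb
      have hxb : x b = 0 := if_neg hb
      rw [hxb, mul_zero]
    rw [← Finset.sum_subset (Finset.subset_univ _) hz2]
    rw [Finset.sum_image (fun a _ b _ h => hcinj h)]
    apply Finset.sum_congr rfl
    intro q _
    rw [hx1, hx1]
    ring
  rw [e1] at hquad
  have e2 : ∑ p : Fin k, ∑ q : Fin k, d (c p) * (A (c p) (c q) : ℚ) ≤ 0 := by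
    apply Finset.sum_nonpos
    intro p _
    rw [← Finset.mul_sum]
    have h1 : (0:ℚ) ≤ d (c p) := le_of_lt (hd (c p))
    have h2 : ∑ q : Fin k, (A (c p) (c q) : ℚ) ≤ 0 := by exact_mod_cast hrow p
    nlinarith
  linarith

/-- No chords: in a finite-type diagram, a vertex of an embedded path is not
adjacent to a non-neighbouring vertex of the path. -/
lemma chord_zero {r s : ℕ} {A : Matrix (Fin r) (Fin r) ℤ} (hA : IsCartanMatrix A)
    {w : Fin (s + 1) → Fin r}
    (hadj : ∀ t : Fin s, 1 ≤ t.val → A (w t.castSucc) (w t.succ) < 0)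
    (hinj : ∀ p q : Fin (s + 1), 1 ≤ p.val → 1 ≤ q.val → w p = w q → p = q)
    (a b : ℕ) (ha : 1 ≤ a) (hab : a + 2 ≤ b) (hb : b ≤ s) :
    A (w ⟨a, by omega⟩) (w ⟨b, by omega⟩) = 0 := by
  by_contra hne
  obtain ⟨hdiag, hoff, hsym0, hd⟩ := hA
  have hwab : w ⟨a, by omega⟩ ≠ w ⟨b, by omega⟩ := by
    intro h
    have h2 : a = b := congrArg Fin.val
      (hinj ⟨a, by omega⟩ ⟨b, by omega⟩ (show 1 ≤ a by omega) (show 1 ≤ b by omega) h)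
    omega
  have hbak : A (w ⟨b, by omega⟩) (w ⟨a, by omega⟩) < 0 := by
    have h0 : A (w ⟨b, by omega⟩) (w ⟨a, by omega⟩) ≠ 0 := by
      intro h0
      exact hne ((hsym0 _ _).2 h0)
    have := hoff (w ⟨b, by omega⟩) (w ⟨a, by omega⟩) hwab.symm
    omega
  refine no_cycle (A := A) ⟨hdiag, hoff, hsym0, hd⟩ (show 3 ≤ b - a + 1 by omega)
    (fun p : Fin (b - a + 1) => w ⟨a + p.val, by omega⟩) ?_ ?_ ?_
  · intro p q h
    have h2 : a + p.val = a + q.val := congrArg Fin.val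
      (hinj ⟨a + p.val, by omega⟩ ⟨a + q.val, by omega⟩
        (show 1 ≤ a + p.val by omega) (show 1 ≤ a + q.val by omega) h)
    exact Fin.ext (by omega)
  · intro p hp
    exact hadj ⟨a + p, show a + p < s by omega⟩ (show 1 ≤ a + p by omega)
  · show A (w ⟨a + (b - a + 1 - 1), by omega⟩) (w ⟨a + 0, by omega⟩) < 0
    have e1 : (⟨a + (b - a + 1 - 1), by omega⟩ : Fin (s + 1)) = ⟨b, by omega⟩ :=
      Fin.ext (show a + (b - a + 1 - 1) = b by omega)
    have e2 : (⟨a + 0, by omega⟩ : Fin (s + 1)) = ⟨a, by omega⟩ :=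
      Fin.ext (show a + 0 = a by omega)
    rw [e1, e2]
    exact hbak

end Aux

/-- With `A` a Cartan matrix, `i` a word, `λ` dominant,
`c_{jk} = A_{i_j i_k}`, `ℓ_j = λ_{i_j}`: if `(i_{j_0}, …, i_{j_s})` is a
subword of `i` which is a minimal hesitant `λ`-walk with `s ≥ 2`, and `σ` is
`−` exactly on `{j_0, …, j_s}`, then `m_{σ,p} = 0` for `p ∉ {j_0,…,j_s}`,
`m_{σ,j_s} = ℓ_{j_s} > 0`, `m_{σ,j_t} = −c_{j_t j_{t+1}} m_{σ,j_{t+1}}` for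
`1 ≤ t ≤ s−1`, and `m_{σ,j_0} = −(2 m_{σ,j_1} + c_{j_0 j_2} m_{σ,j_2})`. -/
theorem statement12 {r n : ℕ} (A : Matrix (Fin r) (Fin r) ℤ)
    (hA : IsCartanMatrix A) (lam : Fin r → ℤ) (hlam : ∀ a, 0 ≤ lam a)
    (i : Fin n → Fin r) (s : ℕ) (hs : 2 ≤ s)
    (j : Fin (s + 1) → Fin n) (hj : StrictMono j)
    (hw : IsHesitantLambdaWalkSeq A lam (i ∘ j))
    (hmin : MinimalHLW lam (i ∘ j))
    (σ : Fin n → Bool) (hσ : ∀ p, σ p = true ↔ ∃ t, j t = p) :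
    (∀ p : Fin n, (∀ t, j t ≠ p) →
      GKm (fun p q => A (i p) (i q)) (fun p => lam (i p)) σ p = 0) ∧
    (GKm (fun p q => A (i p) (i q)) (fun p => lam (i p)) σ (j (Fin.last s)) =
      lam (i (j (Fin.last s))) ∧
     0 < GKm (fun p q => A (i p) (i q)) (fun p => lam (i p)) σ (j (Fin.last s))) ∧
    (∀ t : Fin s, 1 ≤ t.val →
      GKm (fun p q => A (i p) (i q)) (fun p => lam (i p)) σ (j t.castSucc) =
        - A (i (j t.castSucc)) (i (j t.succ)) *
          GKm (fun p q => A (i p) (i q)) (fun p => lam (i p)) σ (j t.succ)) ∧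
    GKm (fun p q => A (i p) (i q)) (fun p => lam (i p)) σ (j 0) =
      -(2 * GKm (fun p q => A (i p) (i q)) (fun p => lam (i p)) σ (j ⟨1, by omega⟩) +
        A (i (j 0)) (i (j ⟨2, by omega⟩)) *
          GKm (fun p q => A (i p) (i q)) (fun p => lam (i p)) σ (j ⟨2, by omega⟩)) := by
  obtain ⟨hdiag, hoff, hsym0, hd⟩ := hA
  obtain ⟨hs1, h01, hwalk, hlast⟩ := hw
  obtain ⟨hminj, hmzero⟩ := hmin
  have hadj' : ∀ t : Fin s, 1 ≤ t.val → A ((i ∘ j) t.castSucc) ((i ∘ j) t.succ) < 0 :=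
    fun t ht => (hwalk t ht).2
  have hchord : ∀ (a b : ℕ) (ha : 1 ≤ a) (hab : a + 2 ≤ b) (hb : b ≤ s),
      A (i (j ⟨a, by omega⟩)) (i (j ⟨b, by omega⟩)) = 0 :=
    fun a b ha hab hb => chord_zero ⟨hdiag, hoff, hsym0, hd⟩ hadj' hminj a b ha hab hb
  have key : ∀ t : Fin (s + 1),
      GKm (fun p q => A (i p) (i q)) (fun p => lam (i p)) σ (j t) =
        lam (i (j t)) - ∑ u ∈ Finset.univ.filter (fun u : Fin (s + 1) => t < u),
          A (i (j t)) (i (j u)) *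
            GKm (fun p q => A (i p) (i q)) (fun p => lam (i p)) σ (j u) :=
    fun t => GKm_image (fun p q => A (i p) (i q)) (fun p => lam (i p)) σ j hj hσ t
  have h1lt : (1 : ℕ) < s + 1 := by omega
  have h2lt : (2 : ℕ) < s + 1 := by omega
  have e1 : (1 : Fin (s + 1)) = ⟨1, h1lt⟩ := by
    apply Fin.ext; simp [Fin.val_one']; omega
  have hw01 : i (j 0) = i (j ⟨1, h1lt⟩) := by
    have h := h01
    rw [e1] at h
    exact h
  refine ⟨fun p hp => GKm_zero_of_not_mem _ _ σ j hσ p hp, ?_, ?_, ?_⟩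
  · -- the last index
    have hfe : Finset.univ.filter (fun u : Fin (s + 1) => Fin.last s < u) = ∅ :=
      Finset.filter_false_of_mem (fun u _ => (show u ≤ Fin.last s from Fin.le_last u).not_gt)
    have hlast' : 0 < lam (i (j (Fin.last s))) := hlast
    constructor
    · rw [key (Fin.last s), hfe, Finset.sum_empty]; ring
    · rw [key (Fin.last s), hfe, Finset.sum_empty]; omega
  · -- the middle indices
    intro t ht
    have hℓ0 : lam (i (j t.castSucc)) = 0 :=
      hmzero hs t.castSucc (show t.val ≤ s - 1 by omega)
    have hsum : ∑ u ∈ Finset.univ.filter (fun u : Fin (s + 1) => t.castSucc < u),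
        A (i (j t.castSucc)) (i (j u)) *
          GKm (fun p q => A (i p) (i q)) (fun p => lam (i p)) σ (j u)
        = A (i (j t.castSucc)) (i (j t.succ)) *
          GKm (fun p q => A (i p) (i q)) (fun p => lam (i p)) σ (j t.succ) := by
      apply Finset.sum_eq_single_of_mem
      · simp only [Finset.mem_filter, Finset.mem_univ, true_and]
        exact Fin.castSucc_lt_succ
      · intro u hu hne2
        simp only [Finset.mem_filter, Finset.mem_univ, true_and] at hu
        have hlt : t.val < u.val := hu
        have hne3 : u.val ≠ t.val + 1 := fun h => hne2 (Fin.ext h)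
        have h0 : A (i (j t.castSucc)) (i (j u)) = 0 :=
          hchord t.val u.val ht (by omega) (by have := u.isLt; omega)
        rw [h0, zero_mul]
    rw [key t.castSucc, hsum, hℓ0]
    ring
  · -- the index 0
    have hℓ0 : lam (i (j 0)) = 0 := hmzero hs 0 (Nat.zero_le _)
    have hsub : ({⟨1, h1lt⟩, ⟨2, h2lt⟩} : Finset (Fin (s + 1))) ⊆
        Finset.univ.filter (fun u : Fin (s + 1) => 0 < u) := by
      intro u hu
      simp only [Finset.mem_insert, Finset.mem_singleton] at hu
      simp only [Finset.mem_filter, Finset.mem_univ, true_and]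
      rcases hu with rfl | rfl
      · exact Nat.one_pos
      · exact Nat.zero_lt_two
    have hz : ∀ u ∈ Finset.univ.filter (fun u : Fin (s + 1) => 0 < u),
        u ∉ ({⟨1, h1lt⟩, ⟨2, h2lt⟩} : Finset (Fin (s + 1))) →
        A (i (j 0)) (i (j u)) *
          GKm (fun p q => A (i p) (i q)) (fun p => lam (i p)) σ (j u) = 0 := by
      intro u hu hnu
      simp only [Finset.mem_filter, Finset.mem_univ, true_and] at hu
      simp only [Finset.mem_insert, Finset.mem_singleton, not_or] at hnu
      have h1 : 0 < u.val := hu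
      have h2 : u.val ≠ 1 := fun h => hnu.1 (Fin.ext h)
      have h3 : u.val ≠ 2 := fun h => hnu.2 (Fin.ext h)
      have h0 : A (i (j ⟨1, h1lt⟩)) (i (j u)) = 0 :=
        hchord 1 u.val le_rfl (by omega) (by have := u.isLt; omega)
      rw [hw01, h0, zero_mul]
    have hpair : A (i (j 0)) (i (j ⟨1, h1lt⟩)) = 2 := by
      rw [hw01]; exact hdiag _
    rw [key 0, ← Finset.sum_subset hsub hz,
      Finset.sum_pair (Fin.ne_of_val_ne (show (1 : ℕ) ≠ 2 by omega)), hpair, hℓ0]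
    ring
end

section
/- Fix integers c_{jk} (1 ≤ j < k ≤ n) and ℓ_1,…,ℓ_n, and indices 1 ≤ j_0 < j_1 < ⋯ < j_s ≤ n with s ≥ 2. Assume: ℓ_{j_t} = 0 for 0 ≤ t ≤ s−1 and ℓ_{j_s} > 0; c_{j_0 j_1} = 2; c_{j_t j_{t+1}} = −1 for 1 ≤ t ≤ s−1 and c_{j_0 j_2} = −1; c_{j_p j_q} = 0 whenever 1 ≤ p < q ≤ s and q − p ≥ 2, and c_{j_0 j_q} = 0 for 3 ≤ q ≤ s. Define σ ∈ {+,−}^n by σ_p = − if p ∈ {j_0,…,j_s} and σ_p = + otherwise. Then m_{σ,j_1} = m_{σ,j_2} = ⋯ = m_{σ,j_s} = ℓ_{j_s} and m_{σ,j_0} = −ℓ_{j_s} < 0. -/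
open Finset

lemma GKm_of_false {n : ℕ} (c : Fin n → Fin n → ℤ) (ℓ : Fin n → ℤ)
    (σ : Fin n → Bool) (k : Fin n) (h : σ k = false) : GKm c ℓ σ k = 0 := by
  rw [GKm, h]; simp

lemma GKm_of_true {n : ℕ} (c : Fin n → Fin n → ℤ) (ℓ : Fin n → ℤ)
    (σ : Fin n → Bool) (k : Fin n) (h : σ k = true) :
    GKm c ℓ σ k = ℓ k - ∑ p ∈ Finset.univ.filter (fun p : Fin n => k < p),
      c k p * GKm c ℓ σ p := by
  rw [GKm, h]
  simp only [if_true]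
  rw [Finset.sum_attach (Finset.univ.filter (fun p : Fin n => k < p))
    (fun p => c k p * GKm c ℓ σ p)]

lemma GKm_sum_reindex {n : ℕ} (c : Fin n → Fin n → ℤ) (ℓ : Fin n → ℤ)
    (s : ℕ) (j : Fin (s + 1) → Fin n) (hj : StrictMono j)
    (σ : Fin n → Bool) (hσ : ∀ p, σ p = true ↔ ∃ t, j t = p)
    (t : Fin (s + 1)) :
    ∑ p ∈ Finset.univ.filter (fun p : Fin n => j t < p), c (j t) p * GKm c ℓ σ p
    = ∑ u ∈ Finset.univ.filter (fun u : Fin (s + 1) => t < u),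
        c (j t) (j u) * GKm c ℓ σ (j u) := by
  have himg : (Finset.univ.filter (fun u : Fin (s + 1) => t < u)).image j ⊆
      Finset.univ.filter (fun p : Fin n => j t < p) := by
    intro p hp
    simp only [Finset.mem_image, Finset.mem_filter, Finset.mem_univ, true_and] at hp ⊢
    obtain ⟨u, hu, rfl⟩ := hp
    exact hj hu
  rw [← Finset.sum_subset himg (fun p hp hnp => by
    have hσp : σ p = false := by
      by_contra h
      obtain ⟨u, rfl⟩ := (hσ p).mp (by simpa using h)
      apply hnp
      simp only [Finset.mem_filter, Finset.mem_univ, true_and] at hp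
      simp only [Finset.mem_image, Finset.mem_filter, Finset.mem_univ, true_and]
      exact ⟨u, hj.lt_iff_lt.mp hp, rfl⟩
    rw [GKm_of_false c ℓ σ p hσp, mul_zero])]
  rw [Finset.sum_image (fun a _ b _ h => hj.injective h)]

/-- Simply-laced-type computation: for indices
`j_0 < j_1 < ⋯ < j_s` (`s ≥ 2`) with `ℓ_{j_t} = 0` for `t ≤ s−1`,
`ℓ_{j_s} > 0`, `c_{j_0 j_1} = 2`, `c_{j_t j_{t+1}} = −1` (`1 ≤ t ≤ s−1`),
`c_{j_0 j_2} = −1`, and the remaining `c`'s among the `j`'s zero, and `σ`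
equal to `−` exactly on `{j_0, …, j_s}`, one has
`m_{σ,j_1} = ⋯ = m_{σ,j_s} = ℓ_{j_s}` and `m_{σ,j_0} = −ℓ_{j_s} < 0`. -/
theorem statement13 {n : ℕ} (c : Fin n → Fin n → ℤ) (ℓ : Fin n → ℤ)
    (s : ℕ) (hs : 2 ≤ s) (j : Fin (s + 1) → Fin n) (hj : StrictMono j)
    (hl0 : ∀ t : Fin (s + 1), t.val ≤ s - 1 → ℓ (j t) = 0)
    (hls : 0 < ℓ (j (Fin.last s)))
    (hc01 : c (j 0) (j ⟨1, by omega⟩) = 2)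
    (hchain : ∀ t : Fin s, 1 ≤ t.val → c (j t.castSucc) (j t.succ) = -1)
    (hc02 : c (j 0) (j ⟨2, by omega⟩) = -1)
    (hzero : ∀ p q : Fin (s + 1), 1 ≤ p.val → p.val + 2 ≤ q.val →
      c (j p) (j q) = 0)
    (hzero0 : ∀ q : Fin (s + 1), 3 ≤ q.val → c (j 0) (j q) = 0)
    (σ : Fin n → Bool) (hσ : ∀ p, σ p = true ↔ ∃ t, j t = p) :
    (∀ t : Fin (s + 1), 1 ≤ t.val →
      GKm c ℓ σ (j t) = ℓ (j (Fin.last s))) ∧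
    GKm c ℓ σ (j 0) = - ℓ (j (Fin.last s)) ∧
    GKm c ℓ σ (j 0) < 0 := by
  have hσj : ∀ t : Fin (s + 1), σ (j t) = true := fun t => (hσ (j t)).mpr ⟨t, rfl⟩
  have hstep : ∀ t : Fin (s + 1), GKm c ℓ σ (j t) =
      ℓ (j t) - ∑ u ∈ Finset.univ.filter (fun u : Fin (s + 1) => t < u),
        c (j t) (j u) * GKm c ℓ σ (j u) := by
    intro t
    rw [GKm_of_true c ℓ σ (j t) (hσj t), GKm_sum_reindex c ℓ s j hj σ hσ t]
  set L := ℓ (j (Fin.last s)) with hL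
  have key : ∀ d : ℕ, ∀ t : Fin (s + 1), s - t.val = d → 1 ≤ t.val →
      GKm c ℓ σ (j t) = L := by
    intro d
    induction d with
    | zero =>
      intro t ht _
      have hts : t = Fin.last s := by
        apply Fin.ext
        have := t.isLt
        simp only [Fin.val_last]
        omega
      subst hts
      rw [hstep]
      have hemp : Finset.univ.filter (fun u : Fin (s + 1) => Fin.last s < u) = ∅ := by
        apply Finset.filter_false_of_mem
        intro u _
        exact not_lt.mpr (Fin.le_last u)
      rw [hemp, Finset.sum_empty, sub_zero]
    | succ d ih =>
      intro t ht h1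
      have hts : t.val < s := by omega
      have hlt : t.val + 1 < s + 1 := by omega
      have hsucc : (⟨t.val + 1, hlt⟩ : Fin (s + 1)) ∈
          Finset.univ.filter (fun u : Fin (s + 1) => t < u) := by
        simp only [Finset.mem_filter, Finset.mem_univ, true_and, Fin.lt_def]
        exact Nat.lt_succ_self t.val
      rw [hstep, hl0 t (by omega),
        Finset.sum_eq_single_of_mem _ hsucc (fun u hu hne => by
          simp only [Finset.mem_filter, Finset.mem_univ, true_and, Fin.lt_def] at hu
          have h2u : t.val + 2 ≤ u.val := by
            rcases Nat.lt_or_ge u.val (t.val + 2) with h | h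
            · exact absurd (Fin.ext (by simp; omega)) hne
            · exact h
          rw [hzero t u h1 h2u, zero_mul])]
      have hchain' : c (j t) (j ⟨t.val + 1, hlt⟩) = -1 := by
        have hc := hchain ⟨t.val, hts⟩ h1
        have h1e : (⟨t.val, hts⟩ : Fin s).castSucc = t := Fin.ext rfl
        have h2e : (⟨t.val, hts⟩ : Fin s).succ = ⟨t.val + 1, hlt⟩ := Fin.ext rfl
        rwa [h1e, h2e] at hc
      rw [hchain', ih ⟨t.val + 1, hlt⟩ (show s - (t.val + 1) = d by omega)
        (le_add_self)]
      ring
  have h1lt : (1 : ℕ) < s + 1 := by omega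
  have h2lt : (2 : ℕ) < s + 1 := by omega
  have h1L : GKm c ℓ σ (j ⟨1, h1lt⟩) = L := key (s - 1) _ rfl le_rfl
  have h2L : GKm c ℓ σ (j ⟨2, h2lt⟩) = L := key (s - 2) _ rfl (Nat.le_succ 1)
  have h0 : GKm c ℓ σ (j 0) = -L := by
    rw [hstep, hl0 0 (by simp)]
    have hmem1 : (⟨1, h1lt⟩ : Fin (s + 1)) ∈
        Finset.univ.filter (fun u : Fin (s + 1) => 0 < u) := by
      exact Finset.mem_filter.mpr ⟨Finset.mem_univ _, Fin.lt_def.mpr (by simp)⟩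
    have hmem2 : (⟨2, h2lt⟩ : Fin (s + 1)) ∈
        Finset.univ.filter (fun u : Fin (s + 1) => 0 < u) := by
      exact Finset.mem_filter.mpr ⟨Finset.mem_univ _, Fin.lt_def.mpr (by simp)⟩
    have hsum : ∑ u ∈ Finset.univ.filter (fun u : Fin (s + 1) => 0 < u),
        c (j 0) (j u) * GKm c ℓ σ (j u)
        = c (j 0) (j ⟨1, h1lt⟩) * GKm c ℓ σ (j ⟨1, h1lt⟩)
          + c (j 0) (j ⟨2, h2lt⟩) * GKm c ℓ σ (j ⟨2, h2lt⟩) := by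
      refine Finset.sum_eq_add_of_mem _ _ hmem1 hmem2 (by simp [Fin.ext_iff])
        (fun u hu hne => ?_)
      simp only [Finset.mem_filter, Finset.mem_univ, true_and, Fin.lt_def] at hu
      obtain ⟨hne1, hne2⟩ := hne
      have h1' : u.val ≠ 1 := fun h => hne1 (Fin.ext h)
      have h2' : u.val ≠ 2 := fun h => hne2 (Fin.ext h)
      have hu3 : 3 ≤ u.val := by omega
      rw [hzero0 u hu3, zero_mul]
    rw [hsum, h1L, h2L]
    have hc01' : c (j 0) (j ⟨1, h1lt⟩) = 2 := hc01
    have hc02' : c (j 0) (j ⟨2, h2lt⟩) = -1 := hc02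
    rw [hc01', hc02']
    ring
  refine ⟨fun t h1 => key (s - t.val) t rfl h1, h0, ?_⟩
  rw [h0]; omega
end
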